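/- arXiv:math/0611184 — 2 statements merged into one kernel-verified Lean document; each statement's English description precedes it below -/
import Mathlib

section
/- With the notation and parametrization of the previous setting (A = b_1^{-1}b_2^{-1} R b_1 b_2, B, C as semi-diagonal shifts of b, and D the q-twist of R̃), the following two statements are equivalent: (a) there exists an invertible scalar solution k : ℂ^n → GL(n,ℂ) of the semi-dynamical reflection equation with these A, B, C, D; (b) D can be written as D_{12}(λ) = p_1(λ+h_2)^{-1} p_2(λ)^{-1} R p_1(λ) p_2(λ+h_1) with the same non-dynamical R that parametrizes A, where p(λ) = b(λ) k(λ). Moreover in direction (b) ⇒ (a), k(λ) := b(λ)^{-1} p(λ) is an invertible scalar solution. -/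
open Matrix Kronecker BigOperators

/-- `γ ε_i` : the shift vector adding `γ` to the `i`-th dynamical coordinate. -/
def eps (n : ℕ) (γ : ℂ) (i : Fin n) : Fin n → ℂ := fun j => if j = i then γ else 0

/-- `e_{ii}` diagonal matrix unit. -/
def E {n : ℕ} (i : Fin n) : Matrix (Fin n) (Fin n) ℂ := Matrix.single i i 1

/-- Space-1 dynamical shift `X₁(λ+h₂) = ∑ᵢ X(λ+γεᵢ) ⊗ e_{ii}`. -/
noncomputable def sh1 {n : ℕ} (γ : ℂ) (X : (Fin n → ℂ) → Matrix (Fin n) (Fin n) ℂ)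
    (l : Fin n → ℂ) : Matrix (Fin n × Fin n) (Fin n × Fin n) ℂ :=
  ∑ i : Fin n, X (l + eps n γ i) ⊗ₖ E i

/-- Space-2 dynamical shift `X₂(λ+h₁) = ∑ᵢ e_{ii} ⊗ X(λ+γεᵢ)`. -/
noncomputable def sh2 {n : ℕ} (γ : ℂ) (X : (Fin n → ℂ) → Matrix (Fin n) (Fin n) ℂ)
    (l : Fin n → ℂ) : Matrix (Fin n × Fin n) (Fin n × Fin n) ℂ :=
  ∑ i : Fin n, E i ⊗ₖ X (l + eps n γ i)

/-- The semi-dynamical reflection equation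
`A K₁ B K₂(λ+h₁) = K₂ C K₁(λ+h₂) D`. -/
noncomputable def SDRE {n : ℕ} (γ : ℂ)
    (A B C D : (Fin n → ℂ) → Matrix (Fin n × Fin n) (Fin n × Fin n) ℂ)
    (K : (Fin n → ℂ) → Matrix (Fin n) (Fin n) ℂ) : Prop :=
  ∀ l : Fin n → ℂ,
    A l * (K l ⊗ₖ (1 : Matrix (Fin n) (Fin n) ℂ)) * B l * sh2 γ K l
      = ((1 : Matrix (Fin n) (Fin n) ℂ) ⊗ₖ K l) * C l * sh1 γ K l * D l

/-- The detwisting of a non-dynamical `R` by a twist `p`: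
`p₁(λ+h₂)⁻¹ p₂(λ)⁻¹ R p₁(λ) p₂(λ+h₁)`. -/
noncomputable def detwist {n : ℕ} (γ : ℂ) (R : Matrix (Fin n × Fin n) (Fin n × Fin n) ℂ)
    (p : (Fin n → ℂ) → Matrix (Fin n) (Fin n) ℂ) (l : Fin n → ℂ) :
    Matrix (Fin n × Fin n) (Fin n × Fin n) ℂ :=
  sh1 γ (fun μ => (p μ)⁻¹) l * ((1 : Matrix (Fin n) (Fin n) ℂ) ⊗ₖ (p l)⁻¹) * R
    * (p l ⊗ₖ (1 : Matrix (Fin n) (Fin n) ℂ)) * sh2 γ p l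


section AuxLemmas
variable {n : ℕ}


lemma E_mul_E (i j : Fin n) : E i * E j = if i = j then E i else 0 := by
  unfold E
  rcases eq_or_ne i j with rfl | h
  · simp
  · rw [if_neg h]; exact Matrix.single_mul_single_of_ne 1 i i j h 1

lemma sum_E_eq_one : (∑ i : Fin n, E i) = 1 := by
  ext a c
  by_cases h : a = c
  · subst h
    simp [E, Matrix.sum_apply, Matrix.single, Matrix.one_apply]
  · simp only [E, Matrix.sum_apply, Matrix.single, Matrix.of_apply, Matrix.one_apply,
      h, if_false]
    refine Finset.sum_eq_zero fun x _ => if_neg ?_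
    rintro ⟨rfl, rfl⟩; exact h rfl

lemma kron_mul_sum (M N : Matrix (Fin n) (Fin n) ℂ) (f g : Fin n → Matrix (Fin n) (Fin n) ℂ) :
    (M ⊗ₖ N) * (∑ i, f i ⊗ₖ g i) = ∑ i, (M * f i) ⊗ₖ (N * g i) := by
  rw [Finset.mul_sum]
  simp [← Matrix.mul_kronecker_mul]

lemma kron_sum_right (M : Matrix (Fin n) (Fin n) ℂ) (f : Fin n → Matrix (Fin n) (Fin n) ℂ) :
    ∑ i : Fin n, M ⊗ₖ f i = M ⊗ₖ (∑ i, f i) := by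
  ext x y
  simp [Matrix.sum_apply, Matrix.kroneckerMap_apply, Finset.mul_sum]

lemma mulA (M : Matrix (Fin n) (Fin n) ℂ) (f g : Fin n → Matrix (Fin n) (Fin n) ℂ) :
    (∑ i, f i ⊗ₖ (M * E i)) * (∑ j, g j ⊗ₖ E j) = ∑ i, (f i * g i) ⊗ₖ (M * E i) := by
  rw [Finset.sum_mul_sum]
  refine Finset.sum_congr rfl fun i _ => ?_
  rw [Finset.sum_eq_single i (fun j _ hj => ?_) (fun h => absurd (Finset.mem_univ i) h)]
  · rw [← Matrix.mul_kronecker_mul, mul_assoc, E_mul_E, if_pos rfl]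
  · rw [← Matrix.mul_kronecker_mul, mul_assoc, E_mul_E, if_neg (Ne.symm hj), mul_zero,
      Matrix.kronecker_zero]

lemma mulB (M : Matrix (Fin n) (Fin n) ℂ) (f g : Fin n → Matrix (Fin n) (Fin n) ℂ) :
    (∑ i, (M * E i) ⊗ₖ f i) * (∑ j, E j ⊗ₖ g j) = ∑ i, (M * E i) ⊗ₖ (f i * g i) := by
  rw [Finset.sum_mul_sum]
  refine Finset.sum_congr rfl fun i _ => ?_
  rw [Finset.sum_eq_single i (fun j _ hj => ?_) (fun h => absurd (Finset.mem_univ i) h)]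
  · rw [← Matrix.mul_kronecker_mul, mul_assoc, E_mul_E, if_pos rfl]
  · rw [← Matrix.mul_kronecker_mul, mul_assoc, E_mul_E, if_neg (Ne.symm hj), mul_zero,
      Matrix.zero_kronecker]

lemma mulA' (f g : Fin n → Matrix (Fin n) (Fin n) ℂ) :
    (∑ i, f i ⊗ₖ E i) * (∑ j, g j ⊗ₖ E j) = ∑ i, (f i * g i) ⊗ₖ E i := by
  have h := mulA (1 : Matrix (Fin n) (Fin n) ℂ) f g
  simpa using h

lemma cancel_left {m : Type*} [Fintype m] [DecidableEq m] {u v : Matrix m m ℂ}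
    (h : v * u = 1) (X Y : Matrix m m ℂ) : u * X = u * Y ↔ X = Y := by
  constructor
  · intro hxy
    have h2 := congrArg (fun Z => v * Z) hxy
    simpa [← mul_assoc, h] using h2
  · intro hxy; rw [hxy]

lemma shift_eq {m : Type*} [Fintype m] [DecidableEq m] {U V : Matrix m m ℂ}
    (huv : U * V = 1) (hvu : V * U = 1) (X Y : Matrix m m ℂ) :
    X = U * Y ↔ Y = V * X := by
  constructor
  · intro h; rw [h, ← mul_assoc, hvu, one_mul]
  · intro h; rw [h, ← mul_assoc, huv, one_mul]

end AuxLemmas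

lemma core {n : ℕ} (γ : ℂ)
    (R : Matrix (Fin n × Fin n) (Fin n × Fin n) ℂ)
    (b : (Fin n → ℂ) → Matrix (Fin n) (Fin n) ℂ)
    (hb : ∀ l, IsUnit (b l))
    (D : (Fin n → ℂ) → Matrix (Fin n × Fin n) (Fin n × Fin n) ℂ)
    (A : (Fin n → ℂ) → Matrix (Fin n × Fin n) (Fin n × Fin n) ℂ)
    (hA : ∀ l, A l = ((b l)⁻¹ ⊗ₖ (b l)⁻¹) * R * (b l ⊗ₖ b l))
    (B : (Fin n → ℂ) → Matrix (Fin n × Fin n) (Fin n × Fin n) ℂ)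
    (hB : ∀ l, B l = ∑ i : Fin n, E i ⊗ₖ ((b l)⁻¹ * b (l + eps n γ i)))
    (C : (Fin n → ℂ) → Matrix (Fin n × Fin n) (Fin n × Fin n) ℂ)
    (hC : ∀ l, C l = ∑ i : Fin n, ((b l)⁻¹ * b (l + eps n γ i)) ⊗ₖ E i)
    (k : (Fin n → ℂ) → Matrix (Fin n) (Fin n) ℂ) (hk : ∀ l, IsUnit (k l)) :
    SDRE γ A B C D k ↔ ∀ l, D l = detwist γ R (fun μ => b μ * k μ) l := by
  have hbd : ∀ μ, IsUnit (b μ).det := fun μ => (Matrix.isUnit_iff_isUnit_det _).mp (hb μ)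
  have hpd : ∀ μ, IsUnit (b μ * k μ).det :=
    fun μ => (Matrix.isUnit_iff_isUnit_det _).mp ((hb μ).mul (hk μ))
  have hbb : ∀ μ, b μ * (b μ)⁻¹ = 1 := fun μ => Matrix.mul_nonsing_inv _ (hbd μ)
  have hbb' : ∀ μ, (b μ)⁻¹ * b μ = 1 := fun μ => Matrix.nonsing_inv_mul _ (hbd μ)
  have hpp : ∀ μ, (b μ * k μ) * (b μ * k μ)⁻¹ = 1 := fun μ => Matrix.mul_nonsing_inv _ (hpd μ)
  have hpp' : ∀ μ, (b μ * k μ)⁻¹ * (b μ * k μ) = 1 := fun μ => Matrix.nonsing_inv_mul _ (hpd μ)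
  unfold SDRE
  apply forall_congr'
  intro l
  -- the two invertibility facts for the big space
  have hcan : (b l ⊗ₖ b l) * ((b l)⁻¹ ⊗ₖ (b l)⁻¹) = 1 := by
    rw [← Matrix.mul_kronecker_mul, hbb, Matrix.one_kronecker_one]
  -- LHS computation
  have hX1 : (k l ⊗ₖ (1 : Matrix (Fin n) (Fin n) ℂ)) * B l * sh2 γ k l
      = ∑ i, (k l * E i) ⊗ₖ ((b l)⁻¹ * (b (l + eps n γ i) * k (l + eps n γ i))) := by
    rw [hB, kron_mul_sum]
    simp only [one_mul]
    unfold sh2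
    rw [mulB]
    simp only [mul_assoc]
  have hLL : A l * (k l ⊗ₖ (1 : Matrix (Fin n) (Fin n) ℂ)) * B l * sh2 γ k l
      = ((b l)⁻¹ ⊗ₖ (b l)⁻¹)
        * (R * ((b l * k l) ⊗ₖ (1 : Matrix (Fin n) (Fin n) ℂ)
          * sh2 γ (fun μ => b μ * k μ) l)) := by
    rw [hA]
    calc ((b l)⁻¹ ⊗ₖ (b l)⁻¹) * R * (b l ⊗ₖ b l) * (k l ⊗ₖ (1 : Matrix (Fin n) (Fin n) ℂ))
          * B l * sh2 γ k l
        = ((b l)⁻¹ ⊗ₖ (b l)⁻¹)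
          * (R * ((b l ⊗ₖ b l)
            * ((k l ⊗ₖ (1 : Matrix (Fin n) (Fin n) ℂ)) * B l * sh2 γ k l))) := by
          simp only [mul_assoc]
      _ = ((b l)⁻¹ ⊗ₖ (b l)⁻¹)
          * (R * ((b l ⊗ₖ b l)
            * (∑ i, (k l * E i) ⊗ₖ ((b l)⁻¹ * (b (l + eps n γ i) * k (l + eps n γ i)))))) := by
          rw [hX1]
      _ = ((b l)⁻¹ ⊗ₖ (b l)⁻¹)
          * (R * (∑ i, ((b l * k l) * E i) ⊗ₖ (b (l + eps n γ i) * k (l + eps n γ i)))) := by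
          rw [kron_mul_sum]
          simp only [← mul_assoc, hbb, one_mul]
      _ = ((b l)⁻¹ ⊗ₖ (b l)⁻¹)
          * (R * ((b l * k l) ⊗ₖ (1 : Matrix (Fin n) (Fin n) ℂ)
            * sh2 γ (fun μ => b μ * k μ) l)) := by
          unfold sh2
          rw [kron_mul_sum]
          simp only [one_mul]
  -- RHS computation
  have hX2 : ((1 : Matrix (Fin n) (Fin n) ℂ) ⊗ₖ k l) * C l * sh1 γ k l
      = ∑ i, ((b l)⁻¹ * (b (l + eps n γ i) * k (l + eps n γ i))) ⊗ₖ (k l * E i) := by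
    rw [hC, kron_mul_sum]
    simp only [one_mul]
    unfold sh1
    rw [mulA]
    simp only [mul_assoc]
  have hRR : ((1 : Matrix (Fin n) (Fin n) ℂ) ⊗ₖ k l) * C l * sh1 γ k l
      = ((b l)⁻¹ ⊗ₖ (b l)⁻¹)
        * (((1 : Matrix (Fin n) (Fin n) ℂ) ⊗ₖ (b l * k l))
          * sh1 γ (fun μ => b μ * k μ) l) := by
    rw [hX2]
    unfold sh1
    rw [kron_mul_sum, kron_mul_sum]
    simp only [one_mul, ← mul_assoc, hbb']
  -- the inverse of (1 ⊗ π) * sh1 p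
  have hs1 : sh1 γ (fun μ => b μ * k μ) l * sh1 γ (fun μ => (b μ * k μ)⁻¹) l = 1 := by
    unfold sh1
    rw [mulA']
    simp only [hpp]
    rw [kron_sum_right, sum_E_eq_one, Matrix.one_kronecker_one]
  have hs2 : sh1 γ (fun μ => (b μ * k μ)⁻¹) l * sh1 γ (fun μ => b μ * k μ) l = 1 := by
    unfold sh1
    rw [mulA']
    simp only [hpp']
    rw [kron_sum_right, sum_E_eq_one, Matrix.one_kronecker_one]
  have huv : (((1 : Matrix (Fin n) (Fin n) ℂ) ⊗ₖ (b l * k l)) * sh1 γ (fun μ => b μ * k μ) l)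
      * (sh1 γ (fun μ => (b μ * k μ)⁻¹) l
        * ((1 : Matrix (Fin n) (Fin n) ℂ) ⊗ₖ (b l * k l)⁻¹)) = 1 := by
    calc (((1 : Matrix (Fin n) (Fin n) ℂ) ⊗ₖ (b l * k l)) * sh1 γ (fun μ => b μ * k μ) l)
          * (sh1 γ (fun μ => (b μ * k μ)⁻¹) l
            * ((1 : Matrix (Fin n) (Fin n) ℂ) ⊗ₖ (b l * k l)⁻¹))
        = ((1 : Matrix (Fin n) (Fin n) ℂ) ⊗ₖ (b l * k l))
          * ((sh1 γ (fun μ => b μ * k μ) l * sh1 γ (fun μ => (b μ * k μ)⁻¹) l)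
            * ((1 : Matrix (Fin n) (Fin n) ℂ) ⊗ₖ (b l * k l)⁻¹)) := by
          simp only [mul_assoc]
      _ = ((1 : Matrix (Fin n) (Fin n) ℂ) ⊗ₖ (b l * k l))
          * ((1 : Matrix (Fin n) (Fin n) ℂ) ⊗ₖ (b l * k l)⁻¹) := by rw [hs1, one_mul]
      _ = 1 := by
          rw [← Matrix.mul_kronecker_mul, one_mul, hpp l, Matrix.one_kronecker_one]
  have hvu : (sh1 γ (fun μ => (b μ * k μ)⁻¹) l
        * ((1 : Matrix (Fin n) (Fin n) ℂ) ⊗ₖ (b l * k l)⁻¹))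
      * (((1 : Matrix (Fin n) (Fin n) ℂ) ⊗ₖ (b l * k l))
        * sh1 γ (fun μ => b μ * k μ) l) = 1 := by
    calc (sh1 γ (fun μ => (b μ * k μ)⁻¹) l
          * ((1 : Matrix (Fin n) (Fin n) ℂ) ⊗ₖ (b l * k l)⁻¹))
        * (((1 : Matrix (Fin n) (Fin n) ℂ) ⊗ₖ (b l * k l))
          * sh1 γ (fun μ => b μ * k μ) l)
        = sh1 γ (fun μ => (b μ * k μ)⁻¹) l
          * ((((1 : Matrix (Fin n) (Fin n) ℂ) ⊗ₖ (b l * k l)⁻¹)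
            * ((1 : Matrix (Fin n) (Fin n) ℂ) ⊗ₖ (b l * k l)))
            * sh1 γ (fun μ => b μ * k μ) l) := by
          simp only [mul_assoc]
      _ = sh1 γ (fun μ => (b μ * k μ)⁻¹) l * sh1 γ (fun μ => b μ * k μ) l := by
          rw [← Matrix.mul_kronecker_mul, one_mul, hpp' l, Matrix.one_kronecker_one, one_mul]
      _ = 1 := hs2
  have hdet : detwist γ R (fun μ => b μ * k μ) l
      = (sh1 γ (fun μ => (b μ * k μ)⁻¹) l
          * ((1 : Matrix (Fin n) (Fin n) ℂ) ⊗ₖ (b l * k l)⁻¹))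
        * (R * ((b l * k l) ⊗ₖ (1 : Matrix (Fin n) (Fin n) ℂ)
          * sh2 γ (fun μ => b μ * k μ) l)) := by
    unfold detwist
    simp only [mul_assoc]
  rw [hLL, hRR, mul_assoc ((b l)⁻¹ ⊗ₖ (b l)⁻¹), cancel_left hcan, shift_eq huv hvu, hdet]

/-- Proposition 2: with `A = b₁⁻¹b₂⁻¹ R b₁ b₂`, `B, C` the semi-diagonal
shifts of `b` and `D` arbitrary, an invertible scalar solution `k` of the SDRE exists iff
`D` detwists to the same `R` with twist `p = b k`; moreover any detwisting `p` of `D` to `R`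
yields the invertible scalar solution `k = b⁻¹ p`. -/
theorem stmt12 (n : ℕ) (γ : ℂ) (hγ : γ ≠ 0)
    (R : Matrix (Fin n × Fin n) (Fin n × Fin n) ℂ)
    (b : (Fin n → ℂ) → Matrix (Fin n) (Fin n) ℂ)
    (hb : ∀ l, IsUnit (b l))
    (D : (Fin n → ℂ) → Matrix (Fin n × Fin n) (Fin n × Fin n) ℂ)
    (A : (Fin n → ℂ) → Matrix (Fin n × Fin n) (Fin n × Fin n) ℂ)
    (hA : ∀ l, A l = ((b l)⁻¹ ⊗ₖ (b l)⁻¹) * R * (b l ⊗ₖ b l))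
    (B : (Fin n → ℂ) → Matrix (Fin n × Fin n) (Fin n × Fin n) ℂ)
    (hB : ∀ l, B l = ∑ i : Fin n, E i ⊗ₖ ((b l)⁻¹ * b (l + eps n γ i)))
    (C : (Fin n → ℂ) → Matrix (Fin n × Fin n) (Fin n × Fin n) ℂ)
    (hC : ∀ l, C l = ∑ i : Fin n, ((b l)⁻¹ * b (l + eps n γ i)) ⊗ₖ E i) :
    ((∃ k : (Fin n → ℂ) → Matrix (Fin n) (Fin n) ℂ,
        (∀ l, IsUnit (k l)) ∧ SDRE γ A B C D k) ↔
      (∃ k : (Fin n → ℂ) → Matrix (Fin n) (Fin n) ℂ,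
        (∀ l, IsUnit (k l)) ∧ SDRE γ A B C D k ∧
          ∀ l, D l = detwist γ R (fun μ => b μ * k μ) l)) ∧
    (∀ p : (Fin n → ℂ) → Matrix (Fin n) (Fin n) ℂ,
        (∀ l, IsUnit (p l)) → (∀ l, D l = detwist γ R p l) →
          (∀ l, IsUnit ((b l)⁻¹ * p l)) ∧ SDRE γ A B C D (fun l => (b l)⁻¹ * p l)) := by
  refine ⟨⟨?_, ?_⟩, ?_⟩
  · rintro ⟨k, hk, hs⟩
    exact ⟨k, hk, hs, (core γ R b hb D A hA B hB C hC k hk).mp hs⟩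
  · rintro ⟨k, hk, hs, _⟩
    exact ⟨k, hk, hs⟩
  · intro p hp hD
    have hk : ∀ l, IsUnit ((b l)⁻¹ * p l) :=
      fun l => (Matrix.isUnit_nonsing_inv_iff.mpr (hb l)).mul (hp l)
    refine ⟨hk, ?_⟩
    refine (core γ R b hb D A hA B hB C hC _ hk).mpr ?_
    intro l
    have hfun : (fun μ => b μ * ((b μ)⁻¹ * p μ)) = p := by
      funext μ
      rw [← mul_assoc, Matrix.mul_nonsing_inv _ ((Matrix.isUnit_iff_isUnit_det _).mp (hb μ)),
        one_mul]
    simpa only [hfun] using hD l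
end

section
/- Fix γ ≠ 0, V = ℂ^n, R ∈ End(V ⊗ V) constant, b : ℂ^n → GL(n,ℂ), and set A(λ) = b_1^{-1} b_2^{-1} R b_1 b_2, B(λ) = Σ_i e_{ii} ⊗ b(λ)^{-1}b(λ+γε_i), C(λ) = Σ_i (b(λ)^{-1}b(λ+γε_i)) ⊗ e_{ii}. Let D : ℂ^n → End(V⊗V) be arbitrary and suppose K_0 : ℂ^n → End(V) solves the semi-dynamical reflection equation with these A, B, C, D. Suppose q : ℂ^n → End(V) satisfies the shifted intertwining relation R q_1(λ) q_2(λ+h_1) = q_2(λ) q_1(λ+h_2) R and additionally the shift-trivialization q(λ+γε_i) = q(λ+γε_j) for all i, j, λ. Then K(λ) := b(λ)^{-1} q(λ) b(λ) K_0(λ) also solves the semi-dynamical reflection equation with the same A, B, C, D. -/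
open Matrix Kronecker BigOperators

lemma sumE (n : ℕ) : (∑ i : Fin n, E i) = (1 : Matrix (Fin n) (Fin n) ℂ) := by
  ext a c
  simp only [E, Matrix.sum_apply, Matrix.single, Matrix.of_apply, Matrix.one_apply]
  by_cases h : a = c
  · subst h; simp
  · rw [if_neg h, Finset.sum_eq_zero]
    intro i _
    rw [if_neg]
    rintro ⟨rfl, rfl⟩
    exact h rfl

lemma sum_kron_left {n : ℕ} (f : Fin n → Matrix (Fin n) (Fin n) ℂ)
    (Bm : Matrix (Fin n) (Fin n) ℂ) :
    (∑ i : Fin n, f i) ⊗ₖ Bm = ∑ i : Fin n, f i ⊗ₖ Bm := by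
  ext ⟨a1, a2⟩ ⟨c1, c2⟩
  simp [Matrix.kroneckerMap_apply, Matrix.sum_apply, Finset.sum_mul]

lemma sum_kron_right {n : ℕ} (f : Fin n → Matrix (Fin n) (Fin n) ℂ)
    (Bm : Matrix (Fin n) (Fin n) ℂ) :
    Bm ⊗ₖ (∑ i : Fin n, f i) = ∑ i : Fin n, Bm ⊗ₖ f i := by
  ext ⟨a1, a2⟩ ⟨c1, c2⟩
  simp [Matrix.kroneckerMap_apply, Matrix.sum_apply, Finset.mul_sum]

lemma EmulE {n : ℕ} (i j : Fin n) : E i * E j = if i = j then E i else 0 := by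
  by_cases h : i = j
  · subst h; simp [E, Matrix.single_mul_single_same]
  · rw [if_neg h, E, E, Matrix.single_mul_single_of_ne (h := h)]

lemma sumL {n : ℕ} (X Y : Fin n → Matrix (Fin n) (Fin n) ℂ) :
    (∑ i : Fin n, E i ⊗ₖ X i) * (∑ j : Fin n, E j ⊗ₖ Y j)
      = ∑ i : Fin n, E i ⊗ₖ (X i * Y i) := by
  rw [Finset.sum_mul_sum]
  refine Finset.sum_congr rfl fun i _ => ?_
  rw [Finset.sum_eq_single i]
  · rw [← Matrix.mul_kronecker_mul, EmulE, if_pos rfl]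
  · intro j _ hj
    rw [← Matrix.mul_kronecker_mul, EmulE, if_neg (Ne.symm hj), Matrix.zero_kronecker]
  · intro h; exact absurd (Finset.mem_univ i) h

lemma sumR {n : ℕ} (X Y : Fin n → Matrix (Fin n) (Fin n) ℂ) :
    (∑ i : Fin n, X i ⊗ₖ E i) * (∑ j : Fin n, Y j ⊗ₖ E j)
      = ∑ i : Fin n, (X i * Y i) ⊗ₖ E i := by
  rw [Finset.sum_mul_sum]
  refine Finset.sum_congr rfl fun i _ => ?_
  rw [Finset.sum_eq_single i]
  · rw [← Matrix.mul_kronecker_mul, EmulE, if_pos rfl]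
  · intro j _ hj
    rw [← Matrix.mul_kronecker_mul, EmulE, if_neg (Ne.symm hj), Matrix.kronecker_zero]
  · intro h; exact absurd (Finset.mem_univ i) h

lemma cancel_mid {M : Type*} [Monoid M] {a b : M} (h : a * b = 1) (x : M) :
    a * (b * x) = x := by rw [← mul_assoc, h, one_mul]


/-- Proposition 3: if `K₀` solves the SDRE with `A, B, C` parametrized by
`b, R` and `D` arbitrary, and `q` satisfies the shifted intertwining relation
`R q₁ q₂(λ+h₁) = q₂ q₁(λ+h₂) R` together with the shift-trivialization
`q(λ+γεᵢ) = q(λ+γεⱼ)`, then `K = b⁻¹ q b K₀` also solves the SDRE. -/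
theorem stmt13 (n : ℕ) (γ : ℂ) (hγ : γ ≠ 0)
    (R : Matrix (Fin n × Fin n) (Fin n × Fin n) ℂ)
    (b : (Fin n → ℂ) → Matrix (Fin n) (Fin n) ℂ)
    (hb : ∀ l, IsUnit (b l))
    (D : (Fin n → ℂ) → Matrix (Fin n × Fin n) (Fin n × Fin n) ℂ)
    (A : (Fin n → ℂ) → Matrix (Fin n × Fin n) (Fin n × Fin n) ℂ)
    (hA : ∀ l, A l = ((b l)⁻¹ ⊗ₖ (b l)⁻¹) * R * (b l ⊗ₖ b l))
    (B : (Fin n → ℂ) → Matrix (Fin n × Fin n) (Fin n × Fin n) ℂ)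
    (hB : ∀ l, B l = ∑ i : Fin n, E i ⊗ₖ ((b l)⁻¹ * b (l + eps n γ i)))
    (C : (Fin n → ℂ) → Matrix (Fin n × Fin n) (Fin n × Fin n) ℂ)
    (hC : ∀ l, C l = ∑ i : Fin n, ((b l)⁻¹ * b (l + eps n γ i)) ⊗ₖ E i)
    (K₀ : (Fin n → ℂ) → Matrix (Fin n) (Fin n) ℂ)
    (hK₀ : SDRE γ A B C D K₀)
    (q : (Fin n → ℂ) → Matrix (Fin n) (Fin n) ℂ)
    (hq : ∀ l, R * (q l ⊗ₖ (1 : Matrix (Fin n) (Fin n) ℂ)) * sh2 γ q l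
        = ((1 : Matrix (Fin n) (Fin n) ℂ) ⊗ₖ q l) * sh1 γ q l * R)
    (htriv : ∀ (i j : Fin n) (l : Fin n → ℂ), q (l + eps n γ i) = q (l + eps n γ j)) :
    SDRE γ A B C D (fun l => (b l)⁻¹ * q l * b l * K₀ l) := by
  unfold SDRE
  intro l
  rcases Nat.eq_zero_or_pos n with hn | hn
  · subst hn; apply Matrix.ext; rintro ⟨i, _⟩ _; exact i.elim0
  set i0 : Fin n := ⟨0, hn⟩ with hi0
  have hdet : ∀ m, IsUnit (b m).det := fun m => (Matrix.isUnit_iff_isUnit_det _).mp (hb m)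
  have h1 : ∀ m, b m * (b m)⁻¹ = 1 := fun m => Matrix.mul_nonsing_inv _ (hdet m)
  have htr : ∀ i : Fin n, q (l + eps n γ i) = q (l + eps n γ i0) := fun i => htriv i i0 l
  have hsh2q : sh2 γ q l = (1 : Matrix (Fin n) (Fin n) ℂ) ⊗ₖ q (l + eps n γ i0) := by
    rw [sh2, Finset.sum_congr rfl (fun i _ => by rw [htr i]), ← sum_kron_left, sumE]
  have hsh1q : sh1 γ q l = q (l + eps n γ i0) ⊗ₖ (1 : Matrix (Fin n) (Fin n) ℂ) := by
    rw [sh1, Finset.sum_congr rfl (fun i _ => by rw [htr i]), ← sum_kron_right, sumE]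
  have hRswap : R * (q l ⊗ₖ q (l + eps n γ i0)) = (q (l + eps n γ i0) ⊗ₖ q l) * R := by
    have h := hq l
    rw [hsh2q, hsh1q] at h
    calc R * (q l ⊗ₖ q (l + eps n γ i0))
        = R * (q l ⊗ₖ (1 : Matrix (Fin n) (Fin n) ℂ))
            * ((1 : Matrix (Fin n) (Fin n) ℂ) ⊗ₖ q (l + eps n γ i0)) := by
          rw [mul_assoc, ← Matrix.mul_kronecker_mul, Matrix.mul_one, Matrix.one_mul]
      _ = ((1 : Matrix (Fin n) (Fin n) ℂ) ⊗ₖ q l)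
            * (q (l + eps n γ i0) ⊗ₖ (1 : Matrix (Fin n) (Fin n) ℂ)) * R := h
      _ = (q (l + eps n γ i0) ⊗ₖ q l) * R := by
          rw [← Matrix.mul_kronecker_mul, Matrix.mul_one, Matrix.one_mul]
  have hBK : B l * sh2 γ (fun m => (b m)⁻¹ * q m * b m * K₀ m) l
      = ((1 : Matrix (Fin n) (Fin n) ℂ) ⊗ₖ ((b l)⁻¹ * q (l + eps n γ i0) * b l))
          * (B l * sh2 γ K₀ l) := by
    rw [hB l, sh2, sh2, sumL, sumL, ← sumE n, sum_kron_left, sumL]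
    refine Finset.sum_congr rfl fun i _ => ?_
    rw [htr i]
    congr 1
    simp only [mul_assoc, cancel_mid (h1 l), cancel_mid (h1 (l + eps n γ i))]
  have hCK : C l * sh1 γ (fun m => (b m)⁻¹ * q m * b m * K₀ m) l
      = (((b l)⁻¹ * q (l + eps n γ i0) * b l) ⊗ₖ (1 : Matrix (Fin n) (Fin n) ℂ))
          * (C l * sh1 γ K₀ l) := by
    rw [hC l, sh1, sh1, sumR, sumR, ← sumE n, sum_kron_right, sumR]
    refine Finset.sum_congr rfl fun i _ => ?_
    rw [htr i]
    congr 1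
    simp only [mul_assoc, cancel_mid (h1 l), cancel_mid (h1 (l + eps n γ i))]
  have hc1 : b l * ((b l)⁻¹ * q l * b l * K₀ l) = q l * (b l * K₀ l) := by
    simp only [mul_assoc, cancel_mid (h1 l)]
  have hc2 : b l * ((b l)⁻¹ * q (l + eps n γ i0) * b l) = q (l + eps n γ i0) * b l := by
    simp only [mul_assoc, cancel_mid (h1 l)]
  have hc3 : ((b l)⁻¹ * q (l + eps n γ i0) * b l) * (b l)⁻¹ = (b l)⁻¹ * q (l + eps n γ i0) := by
    simp only [mul_assoc, h1 l, mul_one]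
  have hc4 : ((b l)⁻¹ * q l * b l) * (b l)⁻¹ = (b l)⁻¹ * q l := by
    simp only [mul_assoc, h1 l, mul_one]
  have hAK : A l * (((b l)⁻¹ * q l * b l * K₀ l) ⊗ₖ ((b l)⁻¹ * q (l + eps n γ i0) * b l))
      = (((b l)⁻¹ * q (l + eps n γ i0) * b l) ⊗ₖ ((b l)⁻¹ * q l * b l))
          * (A l * (K₀ l ⊗ₖ (1 : Matrix (Fin n) (Fin n) ℂ))) := by
    rw [hA l]
    calc ((b l)⁻¹ ⊗ₖ (b l)⁻¹) * R * (b l ⊗ₖ b l)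
          * (((b l)⁻¹ * q l * b l * K₀ l) ⊗ₖ ((b l)⁻¹ * q (l + eps n γ i0) * b l))
        = ((b l)⁻¹ ⊗ₖ (b l)⁻¹) * R
            * ((b l * ((b l)⁻¹ * q l * b l * K₀ l))
              ⊗ₖ (b l * ((b l)⁻¹ * q (l + eps n γ i0) * b l))) := by
          rw [mul_assoc, ← Matrix.mul_kronecker_mul, ← mul_assoc]
      _ = ((b l)⁻¹ ⊗ₖ (b l)⁻¹) * R
            * ((q l ⊗ₖ q (l + eps n γ i0)) * ((b l * K₀ l) ⊗ₖ b l)) := by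
          rw [hc1, hc2, Matrix.mul_kronecker_mul]
      _ = ((b l)⁻¹ ⊗ₖ (b l)⁻¹)
            * ((R * (q l ⊗ₖ q (l + eps n γ i0))) * ((b l * K₀ l) ⊗ₖ b l)) := by
          rw [mul_assoc, ← mul_assoc R]
      _ = ((b l)⁻¹ ⊗ₖ (b l)⁻¹)
            * (((q (l + eps n γ i0) ⊗ₖ q l) * R) * ((b l * K₀ l) ⊗ₖ b l)) := by
          rw [hRswap]
      _ = (((b l)⁻¹ * q (l + eps n γ i0)) ⊗ₖ ((b l)⁻¹ * q l))
            * (R * ((b l * K₀ l) ⊗ₖ b l)) := by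
          rw [← mul_assoc, ← mul_assoc, ← Matrix.mul_kronecker_mul, mul_assoc]
      _ = ((((b l)⁻¹ * q (l + eps n γ i0) * b l) * (b l)⁻¹)
            ⊗ₖ ((((b l)⁻¹ * q l * b l)) * (b l)⁻¹))
            * (R * ((b l * K₀ l) ⊗ₖ b l)) := by
          rw [hc3, hc4]
      _ = (((b l)⁻¹ * q (l + eps n γ i0) * b l) ⊗ₖ ((b l)⁻¹ * q l * b l))
            * (((b l)⁻¹ ⊗ₖ (b l)⁻¹) * (R * ((b l * K₀ l) ⊗ₖ b l))) := by
          rw [Matrix.mul_kronecker_mul, mul_assoc]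
      _ = (((b l)⁻¹ * q (l + eps n γ i0) * b l) ⊗ₖ ((b l)⁻¹ * q l * b l))
            * (((b l)⁻¹ ⊗ₖ (b l)⁻¹) * R * (b l ⊗ₖ b l)
              * (K₀ l ⊗ₖ (1 : Matrix (Fin n) (Fin n) ℂ))) := by
          congr 1
          rw [mul_assoc (((b l)⁻¹ ⊗ₖ (b l)⁻¹) * R) (b l ⊗ₖ b l),
            ← Matrix.mul_kronecker_mul, mul_one, ← mul_assoc]
  calc A l * (((b l)⁻¹ * q l * b l * K₀ l) ⊗ₖ (1 : Matrix (Fin n) (Fin n) ℂ)) * B l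
        * sh2 γ (fun m => (b m)⁻¹ * q m * b m * K₀ m) l
      = A l * (((b l)⁻¹ * q l * b l * K₀ l) ⊗ₖ ((b l)⁻¹ * q (l + eps n γ i0) * b l))
          * (B l * sh2 γ K₀ l) := by
        rw [mul_assoc, mul_assoc, hBK,
          ← mul_assoc (((b l)⁻¹ * q l * b l * K₀ l) ⊗ₖ (1 : Matrix (Fin n) (Fin n) ℂ))
            ((1 : Matrix (Fin n) (Fin n) ℂ) ⊗ₖ ((b l)⁻¹ * q (l + eps n γ i0) * b l)),
          ← Matrix.mul_kronecker_mul, mul_one, one_mul, ← mul_assoc]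
    _ = (((b l)⁻¹ * q (l + eps n γ i0) * b l) ⊗ₖ ((b l)⁻¹ * q l * b l))
          * (A l * (K₀ l ⊗ₖ (1 : Matrix (Fin n) (Fin n) ℂ)) * B l * sh2 γ K₀ l) := by
        rw [hAK, mul_assoc]
        congr 1
        rw [← mul_assoc]
    _ = (((b l)⁻¹ * q (l + eps n γ i0) * b l) ⊗ₖ ((b l)⁻¹ * q l * b l))
          * (((1 : Matrix (Fin n) (Fin n) ℂ) ⊗ₖ K₀ l) * C l * sh1 γ K₀ l * D l) := by
        rw [hK₀ l]
    _ = ((1 : Matrix (Fin n) (Fin n) ℂ) ⊗ₖ ((b l)⁻¹ * q l * b l * K₀ l)) * C l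
          * sh1 γ (fun m => (b m)⁻¹ * q m * b m * K₀ m) l * D l := by
        rw [mul_assoc ((1 : Matrix (Fin n) (Fin n) ℂ) ⊗ₖ ((b l)⁻¹ * q l * b l * K₀ l)) (C l)
            (sh1 γ (fun m => (b m)⁻¹ * q m * b m * K₀ m) l),
          hCK,
          ← mul_assoc ((1 : Matrix (Fin n) (Fin n) ℂ) ⊗ₖ ((b l)⁻¹ * q l * b l * K₀ l))
            (((b l)⁻¹ * q (l + eps n γ i0) * b l) ⊗ₖ (1 : Matrix (Fin n) (Fin n) ℂ)),
          ← Matrix.mul_kronecker_mul, Matrix.one_mul, Matrix.mul_one]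
        have hfuse : (((b l)⁻¹ * q (l + eps n γ i0) * b l) ⊗ₖ ((b l)⁻¹ * q l * b l))
            * ((1 : Matrix (Fin n) (Fin n) ℂ) ⊗ₖ K₀ l)
            = ((b l)⁻¹ * q (l + eps n γ i0) * b l) ⊗ₖ ((b l)⁻¹ * q l * b l * K₀ l) := by
          rw [← Matrix.mul_kronecker_mul, mul_one]
        rw [← hfuse]
        simp only [mul_assoc]
end
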